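/- Let a and b be distinct positive real numbers, and let k be a real number with 0 < k ≤ 1/2. Then A_k(a,b) < I(a,b), where A_k is the power mean of order k and I is the identric mean. -/

import Mathlib

open Real Set

/-- The key analytic inequality: for `0 < s < t`,
`(t² - s²)·log((s+t)/2) < t²·log t - s²·log s - (t² - s²)/2`. -/
private lemma key_ineq {s t : ℝ} (hs : 0 < s) (hst : s < t) :
    (t ^ 2 - s ^ 2) * Real.log ((s + t) / 2) <
      t ^ 2 * Real.log t - s ^ 2 * Real.log s - (t ^ 2 - s ^ 2) / 2 := by
  set g : ℝ → ℝ := fun x => x ^ 2 * Real.log x - s ^ 2 * Real.log s - (x ^ 2 - s ^ 2) / 2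
      - (x ^ 2 - s ^ 2) * Real.log ((s + x) / 2) with hg
  have hderiv : ∀ x ∈ Ioi s, HasDerivAt g
      (2 * x * Real.log x - 2 * x * Real.log ((s + x) / 2) - (x - s)) x := by
    intro x hx
    have hx0 : 0 < x := hs.trans hx
    have hsx : 0 < (s + x) / 2 := by linarith
    have h1 : HasDerivAt (fun x : ℝ => x ^ 2 * Real.log x) (2 * x * Real.log x + x) x := by
      have := (hasDerivAt_pow 2 x).mul (Real.hasDerivAt_log hx0.ne')
      convert this using 1 <;> try rfl
      field_simp
      ring
    have h3 : HasDerivAt (fun x : ℝ => Real.log ((s + x) / 2)) (1 / (s + x)) x := by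
      have hi : HasDerivAt (fun x : ℝ => (s + x) / 2) (1 / 2) x := by
        simpa using ((hasDerivAt_id x).const_add s).div_const 2
      have := (Real.hasDerivAt_log hsx.ne').comp x hi
      convert this using 1 <;> try rfl
      field_simp
    have h2 : HasDerivAt (fun x : ℝ => x ^ 2 - s ^ 2) (2 * x) x := by
      simpa using (hasDerivAt_pow 2 x).sub_const (s ^ 2)
    have h5 : HasDerivAt (fun x : ℝ => (x ^ 2 - s ^ 2) / 2) x x := by
      simpa using h2.div_const 2
    have h4 := h2.mul h3
    have := ((h1.sub_const (s ^ 2 * Real.log s)).sub h5).sub h4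
    convert this using 1 <;> try rfl
    have he : (x ^ 2 - s ^ 2) * (1 / (s + x)) = x - s := by
      rw [mul_one_div, div_eq_iff (by linarith : s + x ≠ 0)]
      ring
    rw [he]
    ring
  have hpos : ∀ x ∈ interior (Ici s), 0 < deriv g x := by
    rw [interior_Ici]
    intro x hx
    rw [(hderiv x hx).deriv]
    have hx0 : 0 < x := hs.trans hx
    have hxs : s < x := hx
    have hm : 0 < (s + x) / 2 := by linarith
    have hmx : (s + x) / 2 < x := by linarith
    have hlog : Real.log (((s + x) / 2) / x) < ((s + x) / 2) / x - 1 :=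
      Real.log_lt_sub_one_of_pos (by positivity) (by
        have : ((s + x) / 2) / x < 1 := (div_lt_one hx0).mpr hmx
        exact this.ne)
    rw [Real.log_div hm.ne' hx0.ne'] at hlog
    have hxx : ((s + x) / 2) / x - 1 = (s - x) / (2 * x) := by
      field_simp
      ring
    rw [hxx] at hlog
    have h2 : (2 * x) * (Real.log ((s + x) / 2) - Real.log x) < (2 * x) * ((s - x) / (2 * x)) :=
      mul_lt_mul_of_pos_left hlog (by linarith)
    have h3 : (2 * x) * ((s - x) / (2 * x)) = s - x := by
      field_simp
    rw [h3] at h2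
    nlinarith [h2]
  have hcont : ContinuousOn g (Ici s) := by
    have hne : ∀ x ∈ Ici s, x ≠ 0 := fun x hx => (hs.trans_le hx).ne'
    have hne2 : ∀ x ∈ Ici s, (s + x) / 2 ≠ 0 := by
      intro x hx
      have hsx : s ≤ x := hx
      have : 0 < (s + x) / 2 := by linarith
      exact this.ne'
    refine ContinuousOn.sub (ContinuousOn.sub (ContinuousOn.sub ?_ continuousOn_const) ?_) ?_
    · exact (continuous_pow 2).continuousOn.mul (continuousOn_id.log hne)
    · exact ((continuous_pow 2).sub continuous_const).continuousOn.div_const 2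
    · exact ((continuous_pow 2).sub continuous_const).continuousOn.mul
        ((((continuous_const.add continuous_id).div_const 2).continuousOn).log hne2)
  have hmono : StrictMonoOn g (Ici s) :=
    strictMonoOn_of_deriv_pos (convex_Ici s) hcont hpos
  have hgs : g s = 0 := by
    simp [hg]
  have := hmono (self_mem_Ici) (mem_Ici.mpr hst.le) hst
  rw [hgs] at this
  simp only [hg] at this
  linarith

/-- Power mean monotonicity specialized: `A_k ≤ A_{1/2}` for `0 < k ≤ 1/2`. -/
private lemma pm_le {a b k : ℝ} (ha : 0 < a) (hb : 0 < b) (hk : 0 < k) (hk2 : k ≤ 1 / 2) :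
    ((a ^ k + b ^ k) / 2) ^ (1 / k) ≤
      ((a ^ ((1 : ℝ) / 2) + b ^ ((1 : ℝ) / 2)) / 2) ^ (2 : ℝ) := by
  set p : ℝ := 1 / (2 * k) with hp
  have hp1 : 1 ≤ p := by
    rw [hp, le_div_iff₀ (by linarith)]
    linarith
  have hu : (0 : ℝ) ≤ a ^ k := (Real.rpow_pos_of_pos ha k).le
  have hv : (0 : ℝ) ≤ b ^ k := (Real.rpow_pos_of_pos hb k).le
  have hconv := (convexOn_rpow hp1).2 (mem_Ici.mpr hu) (mem_Ici.mpr hv)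
    (by norm_num : (0:ℝ) ≤ 1/2) (by norm_num : (0:ℝ) ≤ 1/2) (by norm_num)
  simp only [smul_eq_mul] at hconv
  have hup : (a ^ k) ^ p = a ^ ((1 : ℝ) / 2) := by
    rw [← Real.rpow_mul ha.le]
    congr 1
    rw [hp]
    field_simp
  have hvp : (b ^ k) ^ p = b ^ ((1 : ℝ) / 2) := by
    rw [← Real.rpow_mul hb.le]
    congr 1
    rw [hp]
    field_simp
  have heq : (1 / 2 : ℝ) * (a ^ k) + (1 / 2 : ℝ) * (b ^ k) = (a ^ k + b ^ k) / 2 := by ring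
  rw [heq, hup, hvp] at hconv
  have h2 : (((a ^ k + b ^ k) / 2) ^ p) ^ (2 : ℝ) ≤
      ((a ^ ((1 : ℝ) / 2) + b ^ ((1 : ℝ) / 2)) / 2) ^ (2 : ℝ) := by
    apply Real.rpow_le_rpow (Real.rpow_nonneg (by positivity) p) _ (by norm_num)
    calc ((a ^ k + b ^ k) / 2) ^ p ≤ 1 / 2 * a ^ ((1:ℝ)/2) + 1 / 2 * b ^ ((1:ℝ)/2) := hconv
      _ = (a ^ ((1 : ℝ) / 2) + b ^ ((1 : ℝ) / 2)) / 2 := by ring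
  rw [← Real.rpow_mul (by positivity : (0:ℝ) ≤ (a ^ k + b ^ k) / 2) p 2] at h2
  have hpk : p * (2 : ℝ) = 1 / k := by
    rw [hp]
    field_simp
  rw [hpk] at h2
  exact h2

/-- The case `a < b` of the main theorem. -/
private lemma half_lt_identric {a b : ℝ} (ha : 0 < a) (hb : 0 < b) (hlt : a < b) :
    ((a ^ ((1 : ℝ) / 2) + b ^ ((1 : ℝ) / 2)) / 2) ^ (2 : ℝ) <
      (1 / Real.exp 1) * (b ^ b / a ^ a) ^ (1 / (b - a)) := by
  set s : ℝ := Real.sqrt a with hsdef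
  set t : ℝ := Real.sqrt b with htdef
  have hs : 0 < s := Real.sqrt_pos.mpr ha
  have ht : 0 < t := Real.sqrt_pos.mpr hb
  have hst : s < t := Real.sqrt_lt_sqrt ha.le hlt
  have has : a = s ^ 2 := (Real.sq_sqrt ha.le).symm
  have hbt : b = t ^ 2 := (Real.sq_sqrt hb.le).symm
  have hba : 0 < b - a := sub_pos.mpr hlt
  have hmid : 0 < (s + t) / 2 := by linarith
  have hL : ((a ^ ((1 : ℝ) / 2) + b ^ ((1 : ℝ) / 2)) / 2) ^ (2 : ℝ) = ((s + t) / 2) ^ (2 : ℝ) := by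
    rw [hsdef, htdef, Real.sqrt_eq_rpow, Real.sqrt_eq_rpow]
  rw [hL]
  have hLpos : 0 < ((s + t) / 2) ^ (2 : ℝ) := Real.rpow_pos_of_pos hmid 2
  have hXpos : 0 < b ^ b / a ^ a :=
    div_pos (Real.rpow_pos_of_pos hb b) (Real.rpow_pos_of_pos ha a)
  have hRpos : 0 < (1 / Real.exp 1) * (b ^ b / a ^ a) ^ (1 / (b - a)) := by
    apply mul_pos (by positivity) (Real.rpow_pos_of_pos hXpos _)
  rw [← Real.log_lt_log_iff hLpos hRpos]
  have hlogL : Real.log (((s + t) / 2) ^ (2 : ℝ)) = 2 * Real.log ((s + t) / 2) :=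
    Real.log_rpow hmid 2
  have hlogR : Real.log ((1 / Real.exp 1) * (b ^ b / a ^ a) ^ (1 / (b - a)))
      = -1 + (1 / (b - a)) * (b * Real.log b - a * Real.log a) := by
    rw [Real.log_mul (by positivity) (Real.rpow_pos_of_pos hXpos _).ne']
    rw [Real.log_rpow hXpos]
    rw [Real.log_div (Real.rpow_pos_of_pos hb b).ne' (Real.rpow_pos_of_pos ha a).ne']
    rw [Real.log_rpow hb, Real.log_rpow ha]
    rw [one_div, Real.log_inv, Real.log_exp]
  rw [hlogL, hlogR]
  have key := key_ineq hs hst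
  have hba2 : b - a = t ^ 2 - s ^ 2 := by rw [has, hbt]
  have hlogb : Real.log b = 2 * Real.log t := by
    rw [hbt, Real.log_pow]
    norm_num
  have hloga : Real.log a = 2 * Real.log s := by
    rw [has, Real.log_pow]
    norm_num
  rw [← mul_lt_mul_iff_of_pos_right hba]
  have hexp : (-1 + 1 / (b - a) * (b * Real.log b - a * Real.log a)) * (b - a)
      = b * Real.log b - a * Real.log a - (b - a) := by
    field_simp
    ring
  rw [hexp, hlogb, hloga, hba2, has, hbt]
  nlinarith [key]

theorem power_mean_lt_identric (a b : ℝ) (ha : 0 < a) (hb : 0 < b) (hab : a ≠ b)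
    (k : ℝ) (hk : 0 < k) (hk2 : k ≤ 1 / 2) :
    ((a ^ k + b ^ k) / 2) ^ (1 / k) <
      (1 / Real.exp 1) * (b ^ b / a ^ a) ^ (1 / (b - a)) := by
  rcases lt_or_gt_of_ne hab with hlt | hlt
  · exact lt_of_le_of_lt (pm_le ha hb hk hk2) (half_lt_identric ha hb hlt)
  · have h := lt_of_le_of_lt (pm_le hb ha hk hk2) (half_lt_identric hb ha hlt)
    have hsym : (1 / Real.exp 1) * (a ^ a / b ^ b) ^ (1 / (a - b))
        = (1 / Real.exp 1) * (b ^ b / a ^ a) ^ (1 / (b - a)) := by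
      congr 1
      have hX : (0 : ℝ) ≤ b ^ b / a ^ a :=
        (div_pos (Real.rpow_pos_of_pos hb b) (Real.rpow_pos_of_pos ha a)).le
      have h1 : a ^ a / b ^ b = (b ^ b / a ^ a)⁻¹ := by
        rw [inv_div]
      have h2 : 1 / (a - b) = -(1 / (b - a)) := by
        rw [← one_div_neg_eq_neg_one_div]
        ring_nf
      rw [h1, h2, Real.inv_rpow hX, Real.rpow_neg hX, inv_inv]
    rw [add_comm (b ^ k) (a ^ k), hsym] at h
    exact h
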